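/- With Ξ₁, Ξ₂ as above, [Ξ₁, conj(Ξ₂)] = i·2a·[∂_w, X₁] = ε·i·(4 a z̄/(1+ε|z|²))·∂_w. -/

import Mathlib

open Complex

/-- Wirtinger derivative `∂/∂z` (first coordinate) of `f : ℂ² → ℂ`. -/
noncomputable def dz (f : ℂ × ℂ → ℂ) (p : ℂ × ℂ) : ℂ :=
  (1 / 2) * (fderiv ℝ f p (1, 0) - Complex.I * fderiv ℝ f p (Complex.I, 0))

/-- Wirtinger derivative `∂/∂z̄`. -/
noncomputable def dzb (f : ℂ × ℂ → ℂ) (p : ℂ × ℂ) : ℂ :=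
  (1 / 2) * (fderiv ℝ f p (1, 0) + Complex.I * fderiv ℝ f p (Complex.I, 0))

/-- Wirtinger derivative `∂/∂w` (second coordinate). -/
noncomputable def dw (f : ℂ × ℂ → ℂ) (p : ℂ × ℂ) : ℂ :=
  (1 / 2) * (fderiv ℝ f p (0, 1) - Complex.I * fderiv ℝ f p (0, Complex.I))

/-- Wirtinger derivative `∂/∂w̄`. -/
noncomputable def dwb (f : ℂ × ℂ → ℂ) (p : ℂ × ℂ) : ℂ :=
  (1 / 2) * (fderiv ℝ f p (0, 1) + Complex.I * fderiv ℝ f p (0, Complex.I))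

/-- A complex vector field on `ℂ²`, given by its coefficients in the frame
`(∂_z, ∂_z̄, ∂_w, ∂_w̄)`. -/
abbrev VF := ℂ × ℂ → ℂ × ℂ × ℂ × ℂ

/-- Action of a complex vector field on a function. -/
noncomputable def appVF (X : VF) (f : ℂ × ℂ → ℂ) (p : ℂ × ℂ) : ℂ :=
  (X p).1 * dz f p + (X p).2.1 * dzb f p + (X p).2.2.1 * dw f p +
    (X p).2.2.2 * dwb f p

/-- Lie bracket of complex vector fields (in coefficients). -/
noncomputable def bracketVF (X Y : VF) : VF := fun p =>
  (appVF X (fun q => (Y q).1) p - appVF Y (fun q => (X q).1) p,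
   appVF X (fun q => (Y q).2.1) p - appVF Y (fun q => (X q).2.1) p,
   appVF X (fun q => (Y q).2.2.1) p - appVF Y (fun q => (X q).2.2.1) p,
   appVF X (fun q => (Y q).2.2.2) p - appVF Y (fun q => (X q).2.2.2) p)

/-- Conjugate of a complex vector field: coefficients are conjugated and the
frame vectors `∂_z ↔ ∂_z̄`, `∂_w ↔ ∂_w̄` are swapped. -/
noncomputable def conjVF (X : VF) : VF := fun p =>
  ((starRingEnd ℂ) (X p).2.1, (starRingEnd ℂ) (X p).1,
   (starRingEnd ℂ) (X p).2.2.2, (starRingEnd ℂ) (X p).2.2.1)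

/-- The horizontal lift `X₁ = ∂_z + ε(2wz̄)/(1+ε|z|²) ∂_w`. -/
noncomputable def X₁ (ε : ℝ) : VF := fun p =>
  (1, 0, (ε : ℂ) * 2 * p.2 * (starRingEnd ℂ) p.1 /
    ((1 + ε * Complex.normSq p.1 : ℝ) : ℂ), 0)

/-- The horizontal lift `X₂ = ∂_z̄ + ε(2w̄z)/(1+ε|z|²) ∂_w̄`. -/
noncomputable def X₂ (ε : ℝ) : VF := fun p =>
  (0, 1, 0, (ε : ℂ) * 2 * (starRingEnd ℂ) p.2 * p.1 /
    ((1 + ε * Complex.normSq p.1 : ℝ) : ℂ))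

/-- The weight function `a = sqrt (c1 + 4ε|w|²/(1+ε|z|²)²)`, as a `ℂ`-valued
function on `ℂ²`. -/
noncomputable def wfun (ε c1 : ℝ) (p : ℂ × ℂ) : ℂ :=
  ((Real.sqrt (c1 + ε * 4 * Complex.normSq p.2 /
    (1 + ε * Complex.normSq p.1) ^ 2) : ℝ) : ℂ)

namespace Aux13

lemma I3 : Complex.I ^ 3 = -Complex.I := by
  rw [pow_succ, Complex.I_sq]; ring


/-- derivative of `conj ∘ fst` -/
lemma hconj1 (p : ℂ × ℂ) : HasFDerivAt (fun q : ℂ × ℂ => (starRingEnd ℂ) q.1)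
    (Complex.conjCLE.toContinuousLinearMap.comp (ContinuousLinearMap.fst ℝ ℂ ℂ)) p := by
  have h : HasFDerivAt (fun z : ℂ => (starRingEnd ℂ) z)
      (Complex.conjCLE.toContinuousLinearMap) p.1 := by
    exact Complex.conjCLE.toContinuousLinearMap.hasFDerivAt
  exact h.comp p hasFDerivAt_fst

noncomputable def DN1 (p : ℂ × ℂ) : ℂ × ℂ →L[ℝ] ℝ :=
  (2*p.1.re) • (Complex.reCLM.comp (ContinuousLinearMap.fst ℝ ℂ ℂ)) +
  (2*p.1.im) • (Complex.imCLM.comp (ContinuousLinearMap.fst ℝ ℂ ℂ))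

noncomputable def DN2 (p : ℂ × ℂ) : ℂ × ℂ →L[ℝ] ℝ :=
  (2*p.2.re) • (Complex.reCLM.comp (ContinuousLinearMap.snd ℝ ℂ ℂ)) +
  (2*p.2.im) • (Complex.imCLM.comp (ContinuousLinearMap.snd ℝ ℂ ℂ))

lemma hN1 (p : ℂ × ℂ) : HasFDerivAt (fun q : ℂ × ℂ => Complex.normSq q.1) (DN1 p) p := by
  have hre : HasFDerivAt (fun q : ℂ × ℂ => q.1.re)
      (Complex.reCLM.comp (ContinuousLinearMap.fst ℝ ℂ ℂ)) p :=
    (Complex.reCLM.hasFDerivAt).comp p (hasFDerivAt_fst)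
  have him : HasFDerivAt (fun q : ℂ × ℂ => q.1.im)
      (Complex.imCLM.comp (ContinuousLinearMap.fst ℝ ℂ ℂ)) p :=
    (Complex.imCLM.hasFDerivAt).comp p (hasFDerivAt_fst)
  have h := (hre.mul hre).add (him.mul him)
  have h2 : (fun q : ℂ × ℂ => Complex.normSq q.1)
      = fun q : ℂ × ℂ => q.1.re * q.1.re + q.1.im * q.1.im := by
    funext q; simp [Complex.normSq_apply]
  rw [h2, DN1]
  exact h.congr_fderiv (by module)

lemma hN2 (p : ℂ × ℂ) : HasFDerivAt (fun q : ℂ × ℂ => Complex.normSq q.2) (DN2 p) p := by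
  have hre : HasFDerivAt (fun q : ℂ × ℂ => q.2.re)
      (Complex.reCLM.comp (ContinuousLinearMap.snd ℝ ℂ ℂ)) p :=
    (Complex.reCLM.hasFDerivAt).comp p (hasFDerivAt_snd)
  have him : HasFDerivAt (fun q : ℂ × ℂ => q.2.im)
      (Complex.imCLM.comp (ContinuousLinearMap.snd ℝ ℂ ℂ)) p :=
    (Complex.imCLM.hasFDerivAt).comp p (hasFDerivAt_snd)
  have h := (hre.mul hre).add (him.mul him)
  have h2 : (fun q : ℂ × ℂ => Complex.normSq q.2)
      = fun q : ℂ × ℂ => q.2.re * q.2.re + q.2.im * q.2.im := by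
    funext q; simp [Complex.normSq_apply]
  rw [h2, DN2]
  exact h.congr_fderiv (by module)

lemma hsR (ε : ℝ) (p : ℂ × ℂ) :
    HasFDerivAt (fun q : ℂ × ℂ => (1 + ε * Complex.normSq q.1 : ℝ)) (ε • DN1 p) p := by
  exact ((hN1 p).const_mul ε).const_add (1:ℝ)

/-- derivative of `Gf = ε 2 w conj z / (1+ε|z|²)` -/
noncomputable def DG (ε : ℝ) (p : ℂ × ℂ) : ℂ × ℂ →L[ℝ] ℂ :=
  ((ε:ℂ)*2*p.2*(starRingEnd ℂ) p.1) •
    (Complex.ofRealCLM.comp ((-((1 + ε * Complex.normSq p.1)^2)⁻¹) • (ε • DN1 p))) +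
  (((1 + ε * Complex.normSq p.1 : ℝ)⁻¹ : ℝ) : ℂ) •
    (((ε:ℂ)*2*p.2) • (Complex.conjCLE.toContinuousLinearMap.comp (ContinuousLinearMap.fst ℝ ℂ ℂ))
      + ((starRingEnd ℂ) p.1) • (((ε:ℂ)*2) • (ContinuousLinearMap.snd ℝ ℂ ℂ)))

lemma hGf (ε : ℝ) (p : ℂ × ℂ) (h : (1 + ε * Complex.normSq p.1) ≠ 0) :
    HasFDerivAt (fun q : ℂ × ℂ =>
      (ε:ℂ)*2*q.2*(starRingEnd ℂ) q.1 / ((1 + ε * Complex.normSq q.1 : ℝ) : ℂ))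
      (DG ε p) p := by
  have hnum : HasFDerivAt (fun q : ℂ × ℂ => (ε:ℂ)*2*q.2*(starRingEnd ℂ) q.1)
      (((ε:ℂ)*2*p.2) • (Complex.conjCLE.toContinuousLinearMap.comp (ContinuousLinearMap.fst ℝ ℂ ℂ))
        + ((starRingEnd ℂ) p.1) • (((ε:ℂ)*2) • (ContinuousLinearMap.snd ℝ ℂ ℂ))) p :=
    ((hasFDerivAt_snd).const_mul ((ε:ℂ)*2)).mul (hconj1 p)
  have hinv : HasFDerivAt (fun q : ℂ × ℂ => (((1 + ε * Complex.normSq q.1 : ℝ))⁻¹ : ℝ))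
      ((-((1 + ε * Complex.normSq p.1)^2)⁻¹) • (ε • DN1 p)) p :=
    (hasDerivAt_inv h).comp_hasFDerivAt p (hsR ε p)
  have hinvC := Complex.ofRealCLM.hasFDerivAt.comp p hinv
  have hm := hnum.mul hinvC
  have hfn : (fun q : ℂ × ℂ =>
      (ε:ℂ)*2*q.2*(starRingEnd ℂ) q.1 / ((1 + ε * Complex.normSq q.1 : ℝ) : ℂ))
      = fun q : ℂ × ℂ =>
        ((ε:ℂ)*2*q.2*(starRingEnd ℂ) q.1) * ((((1 + ε * Complex.normSq q.1 : ℝ))⁻¹ : ℝ) : ℂ) := by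
    funext q; rw [div_eq_mul_inv, ← Complex.ofReal_inv]
  rw [hfn, DG]
  exact hm.congr_fderiv (by simp only [Function.comp_apply, Complex.ofRealCLM_apply])

/-- derivative of the real function under the square root -/
noncomputable def DU (ε c1 : ℝ) (p : ℂ × ℂ) : ℂ × ℂ →L[ℝ] ℝ :=
  (ε * 4 * Complex.normSq p.2) •
    ((-(((1 + ε * Complex.normSq p.1)^2)^2)⁻¹) •
      ((2*(1 + ε * Complex.normSq p.1)) • (ε • DN1 p))) +
  (((1 + ε * Complex.normSq p.1)^2)⁻¹) • ((ε * 4) • DN2 p)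

lemma hU (ε c1 : ℝ) (p : ℂ × ℂ) (h : (1 + ε * Complex.normSq p.1) ≠ 0) :
    HasFDerivAt (fun q : ℂ × ℂ =>
      (c1 + ε * 4 * Complex.normSq q.2 / (1 + ε * Complex.normSq q.1) ^ 2 : ℝ))
      (DU ε c1 p) p := by
  have hpow : HasFDerivAt (fun q : ℂ × ℂ => ((1 + ε * Complex.normSq q.1)^2 : ℝ))
      ((2*(1 + ε * Complex.normSq p.1)) • (ε • DN1 p)) p := by
    have := (hsR ε p).mul (hsR ε p)
    have h2 : (fun q : ℂ × ℂ => ((1 + ε * Complex.normSq q.1)^2 : ℝ))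
        = fun q : ℂ × ℂ => (1 + ε * Complex.normSq q.1) * (1 + ε * Complex.normSq q.1) := by
      funext q; ring
    rw [h2]
    exact this.congr_fderiv (by module)
  have hinv : HasFDerivAt (fun q : ℂ × ℂ => ((((1 + ε * Complex.normSq q.1)^2 : ℝ))⁻¹ : ℝ))
      ((-(((1 + ε * Complex.normSq p.1)^2)^2)⁻¹) •
        ((2*(1 + ε * Complex.normSq p.1)) • (ε • DN1 p))) p :=
    (hasDerivAt_inv (pow_ne_zero 2 h)).comp_hasFDerivAt p hpow
  have hnum : HasFDerivAt (fun q : ℂ × ℂ => (ε * 4 * Complex.normSq q.2 : ℝ))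
      ((ε * 4) • DN2 p) p := (hN2 p).const_mul (ε * 4)
  have hm := hnum.mul hinv
  have h0 := (hasFDerivAt_const (c1:ℝ) p).add hm
  have hfn : (fun q : ℂ × ℂ =>
      (c1 + ε * 4 * Complex.normSq q.2 / (1 + ε * Complex.normSq q.1) ^ 2 : ℝ))
      = fun q : ℂ × ℂ =>
        (c1 + (ε * 4 * Complex.normSq q.2) * (((1 + ε * Complex.normSq q.1)^2)⁻¹) : ℝ) := by
    funext q; rw [div_eq_mul_inv]
  rw [hfn, DU]
  exact h0.congr_fderiv (zero_add _)

noncomputable def DA (ε c1 : ℝ) (p : ℂ × ℂ) : ℂ × ℂ →L[ℝ] ℂ :=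
  Complex.ofRealCLM.comp
    ((1 / (2 * Real.sqrt (c1 + ε * 4 * Complex.normSq p.2 / (1 + ε * Complex.normSq p.1) ^ 2))) •
      DU ε c1 p)

lemma hAf (ε c1 : ℝ) (p : ℂ × ℂ) (h : (1 + ε * Complex.normSq p.1) ≠ 0)
    (hu : (c1 + ε * 4 * Complex.normSq p.2 / (1 + ε * Complex.normSq p.1) ^ 2 : ℝ) ≠ 0) :
    HasFDerivAt (wfun ε c1) (DA ε c1 p) p := by
  have h1 := (hU ε c1 p h).sqrt hu
  exact Complex.ofRealCLM.hasFDerivAt.comp p h1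

-- evaluation simp set
attribute [local simp] Complex.ofRealCLM_apply Complex.conjCLE_apply

lemma dz_Gf (ε : ℝ) (p : ℂ × ℂ) (h : (1 + ε * Complex.normSq p.1) ≠ 0) :
    dz (fun q : ℂ × ℂ =>
      (ε:ℂ)*2*q.2*(starRingEnd ℂ) q.1 / ((1 + ε * Complex.normSq q.1 : ℝ) : ℂ)) p
      = -(ε:ℂ)*(ε:ℂ)*2*p.2*((starRingEnd ℂ) p.1)^2 / ((1 + ε * Complex.normSq p.1 : ℝ) : ℂ)^2 := by
  have h0 : ((1 + ε * Complex.normSq p.1 : ℝ) : ℂ) ≠ 0 := Complex.ofReal_ne_zero.mpr h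
  rw [dz, (hGf ε p h).fderiv]
  simp only [DG, DN1, ContinuousLinearMap.add_apply, ContinuousLinearMap.smul_apply,
    ContinuousLinearMap.comp_apply, ContinuousLinearMap.coe_fst', ContinuousLinearMap.coe_snd',
    ContinuousLinearMap.coe_smul', Pi.smul_apply, Complex.ofRealCLM_apply,
    Complex.reCLM_apply, Complex.imCLM_apply, ContinuousLinearEquiv.coe_coe,
    Complex.conjCLE_apply, smul_eq_mul, Complex.one_re, Complex.one_im, Complex.I_re,
    Complex.I_im, map_one, Complex.conj_I, mul_zero, mul_one, zero_mul, add_zero]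
  have hconj : (starRingEnd ℂ) p.1 = (p.1.re:ℂ) - p.1.im*Complex.I := by
    simp [Complex.ext_iff]
  rw [hconj, Complex.normSq_apply]
  push_cast
  field_simp
  ring_nf
  try simp [Complex.I_sq, I3]
  try field_simp
  try ring

lemma dw_Gf (ε : ℝ) (p : ℂ × ℂ) (h : (1 + ε * Complex.normSq p.1) ≠ 0) :
    dw (fun q : ℂ × ℂ =>
      (ε:ℂ)*2*q.2*(starRingEnd ℂ) q.1 / ((1 + ε * Complex.normSq q.1 : ℝ) : ℂ)) p
      = (ε:ℂ)*2*((starRingEnd ℂ) p.1) / ((1 + ε * Complex.normSq p.1 : ℝ) : ℂ) := by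
  have h0 : ((1 + ε * Complex.normSq p.1 : ℝ) : ℂ) ≠ 0 := Complex.ofReal_ne_zero.mpr h
  rw [dw, (hGf ε p h).fderiv]
  simp only [DG, DN1, ContinuousLinearMap.add_apply, ContinuousLinearMap.smul_apply,
    ContinuousLinearMap.comp_apply, ContinuousLinearMap.coe_fst', ContinuousLinearMap.coe_snd',
    ContinuousLinearMap.coe_smul', Pi.smul_apply, Complex.ofRealCLM_apply,
    Complex.reCLM_apply, Complex.imCLM_apply, ContinuousLinearEquiv.coe_coe,
    Complex.conjCLE_apply, smul_eq_mul, Complex.one_re, Complex.one_im, Complex.I_re,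
    Complex.I_im, map_one, Complex.conj_I, mul_zero, mul_one, zero_mul, add_zero,
    Complex.zero_re, Complex.zero_im, map_zero]
  have hconj : (starRingEnd ℂ) p.1 = (p.1.re:ℂ) - p.1.im*Complex.I := by
    simp [Complex.ext_iff]
  rw [hconj, Complex.normSq_apply]
  push_cast
  field_simp
  ring_nf
  try simp [Complex.I_sq, I3]
  try field_simp
  try ring

set_option maxHeartbeats 2000000 in
lemma dz_Af (ε c1 : ℝ) (p : ℂ × ℂ) (h : (1 + ε * Complex.normSq p.1) ≠ 0)
    (hu : (0:ℝ) < c1 + ε * 4 * Complex.normSq p.2 / (1 + ε * Complex.normSq p.1) ^ 2) :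
    dz (wfun ε c1) p
      = -(ε:ℂ)*(ε:ℂ)*4*((Complex.normSq p.2 : ℝ):ℂ)*((starRingEnd ℂ) p.1) /
        (wfun ε c1 p * ((1 + ε * Complex.normSq p.1 : ℝ) : ℂ)^3) := by
  have h0 : ((1 + ε * Complex.normSq p.1 : ℝ) : ℂ) ≠ 0 := Complex.ofReal_ne_zero.mpr h
  have hw0 : wfun ε c1 p ≠ 0 := by
    simp only [wfun, ne_eq, Complex.ofReal_eq_zero]
    exact ne_of_gt (Real.sqrt_pos.mpr hu)
  have hs0 : Real.sqrt (c1 + ε * 4 * Complex.normSq p.2 / (1 + ε * Complex.normSq p.1) ^ 2) ≠ 0 :=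
    ne_of_gt (Real.sqrt_pos.mpr hu)
  rw [dz, (hAf ε c1 p h (ne_of_gt hu)).fderiv]
  simp only [DA, DU, DN1, DN2, ContinuousLinearMap.add_apply, ContinuousLinearMap.smul_apply,
    ContinuousLinearMap.comp_apply, ContinuousLinearMap.coe_fst', ContinuousLinearMap.coe_snd',
    ContinuousLinearMap.coe_smul', Pi.smul_apply, Complex.ofRealCLM_apply,
    Complex.reCLM_apply, Complex.imCLM_apply, ContinuousLinearEquiv.coe_coe,
    Complex.conjCLE_apply, smul_eq_mul, Complex.one_re, Complex.one_im, Complex.I_re,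
    Complex.I_im, map_one, Complex.conj_I, mul_zero, mul_one, zero_mul, add_zero,
    Complex.zero_re, Complex.zero_im, map_zero, wfun]
  obtain ⟨A, hA, hA0⟩ : ∃ A : ℝ, Real.sqrt (c1 + ε * 4 * Complex.normSq p.2 /
      (1 + ε * Complex.normSq p.1) ^ 2) = A ∧ A ≠ 0 :=
    ⟨_, rfl, ne_of_gt (Real.sqrt_pos.mpr hu)⟩
  rw [hA]
  obtain ⟨S, hSe, hS0⟩ : ∃ S : ℝ, 1 + ε * Complex.normSq p.1 = S ∧ S ≠ 0 :=
    ⟨_, rfl, h⟩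
  rw [hSe]
  have hS0' : ((S:ℝ):ℂ) ≠ 0 := Complex.ofReal_ne_zero.mpr hS0
  have hconj : (starRingEnd ℂ) p.1 = (p.1.re:ℂ) - p.1.im*Complex.I := by
    simp [Complex.ext_iff]
  rw [hconj]
  have hA0' : ((A:ℝ):ℂ) ≠ 0 := Complex.ofReal_ne_zero.mpr hA0
  push_cast
  field_simp
  ring_nf
  try simp [Complex.I_sq, I3]
  try field_simp
  try ring

set_option maxHeartbeats 2000000 in
lemma dw_Af (ε c1 : ℝ) (p : ℂ × ℂ) (h : (1 + ε * Complex.normSq p.1) ≠ 0)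
    (hu : (0:ℝ) < c1 + ε * 4 * Complex.normSq p.2 / (1 + ε * Complex.normSq p.1) ^ 2) :
    dw (wfun ε c1) p
      = (ε:ℂ)*2*((starRingEnd ℂ) p.2) /
        (wfun ε c1 p * ((1 + ε * Complex.normSq p.1 : ℝ) : ℂ)^2) := by
  have h0 : ((1 + ε * Complex.normSq p.1 : ℝ) : ℂ) ≠ 0 := Complex.ofReal_ne_zero.mpr h
  have hs0 : Real.sqrt (c1 + ε * 4 * Complex.normSq p.2 / (1 + ε * Complex.normSq p.1) ^ 2) ≠ 0 :=
    ne_of_gt (Real.sqrt_pos.mpr hu)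
  rw [dw, (hAf ε c1 p h (ne_of_gt hu)).fderiv]
  simp only [DA, DU, DN1, DN2, ContinuousLinearMap.add_apply, ContinuousLinearMap.smul_apply,
    ContinuousLinearMap.comp_apply, ContinuousLinearMap.coe_fst', ContinuousLinearMap.coe_snd',
    ContinuousLinearMap.coe_smul', Pi.smul_apply, Complex.ofRealCLM_apply,
    Complex.reCLM_apply, Complex.imCLM_apply, ContinuousLinearEquiv.coe_coe,
    Complex.conjCLE_apply, smul_eq_mul, Complex.one_re, Complex.one_im, Complex.I_re,
    Complex.I_im, map_one, Complex.conj_I, mul_zero, mul_one, zero_mul, add_zero,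
    Complex.zero_re, Complex.zero_im, map_zero, wfun]
  obtain ⟨A, hA, hA0⟩ : ∃ A : ℝ, Real.sqrt (c1 + ε * 4 * Complex.normSq p.2 /
      (1 + ε * Complex.normSq p.1) ^ 2) = A ∧ A ≠ 0 :=
    ⟨_, rfl, ne_of_gt (Real.sqrt_pos.mpr hu)⟩
  rw [hA]
  obtain ⟨S, hSe, hS0⟩ : ∃ S : ℝ, 1 + ε * Complex.normSq p.1 = S ∧ S ≠ 0 :=
    ⟨_, rfl, h⟩
  rw [hSe]
  have hS0' : ((S:ℝ):ℂ) ≠ 0 := Complex.ofReal_ne_zero.mpr hS0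
  have hconj2 : (starRingEnd ℂ) p.2 = (p.2.re:ℂ) - p.2.im*Complex.I := by
    simp [Complex.ext_iff]
  rw [hconj2]
  have hA0' : ((A:ℝ):ℂ) ≠ 0 := Complex.ofReal_ne_zero.mpr hA0
  push_cast
  field_simp
  ring_nf
  try simp [Complex.I_sq, I3]
  try field_simp
  try ring


lemma dz_hadd {p : ℂ × ℂ} {f g : ℂ × ℂ → ℂ} {Df Dg : ℂ × ℂ →L[ℝ] ℂ}
    (hf : HasFDerivAt f Df p) (hg : HasFDerivAt g Dg p) (c : ℂ) :
    dz (fun q => f q + c * g q) p = dz f p + c * dz g p := by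
  have h : HasFDerivAt (fun q => f q + c * g q) _ p := hf.add (hg.const_mul c)
  rw [dz, h.fderiv, dz, hf.fderiv, dz, hg.fderiv]
  simp only [ContinuousLinearMap.add_apply, ContinuousLinearMap.smul_apply, smul_eq_mul]
  ring

lemma dw_hadd {p : ℂ × ℂ} {f g : ℂ × ℂ → ℂ} {Df Dg : ℂ × ℂ →L[ℝ] ℂ}
    (hf : HasFDerivAt f Df p) (hg : HasFDerivAt g Dg p) (c : ℂ) :
    dw (fun q => f q + c * g q) p = dw f p + c * dw g p := by
  have h : HasFDerivAt (fun q => f q + c * g q) _ p := hf.add (hg.const_mul c)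
  rw [dw, h.fderiv, dw, hf.fderiv, dw, hg.fderiv]
  simp only [ContinuousLinearMap.add_apply, ContinuousLinearMap.smul_apply, smul_eq_mul]
  ring

@[simp] lemma dz_const (c : ℂ) (p : ℂ × ℂ) : dz (fun _ => c) p = 0 := by
  simp [dz, fderiv_const]
@[simp] lemma dzb_const (c : ℂ) (p : ℂ × ℂ) : dzb (fun _ => c) p = 0 := by
  simp [dzb, fderiv_const]
@[simp] lemma dw_const (c : ℂ) (p : ℂ × ℂ) : dw (fun _ => c) p = 0 := by
  simp [dw, fderiv_const]
@[simp] lemma dwb_const (c : ℂ) (p : ℂ × ℂ) : dwb (fun _ => c) p = 0 := by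
  simp [dwb, fderiv_const]

end Aux13

/-- `[Ξ₁, conj Ξ₂] = i 2 a [∂_w, X₁] = ε i (4 a z̄/(1+ε|z|²)) ∂_w`. -/
theorem stmt_13 (ε c1 : ℝ) (hε : ε = 1 ∨ ε = -1) (hc1 : 0 < c1) (p : ℂ × ℂ)
    (hz : 0 < 1 + ε * Complex.normSq p.1)
    (ha : 0 < c1 + ε * 4 * Complex.normSq p.2 / (1 + ε * Complex.normSq p.1) ^ 2) :
    bracketVF
        (fun q => ((X₁ ε q).1, (X₁ ε q).2.1,
          (X₁ ε q).2.2.1 + Complex.I * wfun ε c1 q, (X₁ ε q).2.2.2))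
        (conjVF (fun q => ((X₂ ε q).1, (X₂ ε q).2.1, (X₂ ε q).2.2.1,
          (X₂ ε q).2.2.2 + Complex.I * wfun ε c1 q))) p =
      (Complex.I * 2 * wfun ε c1 p) •
        bracketVF (fun _ => (0, 0, 1, 0)) (X₁ ε) p ∧
    bracketVF
        (fun q => ((X₁ ε q).1, (X₁ ε q).2.1,
          (X₁ ε q).2.2.1 + Complex.I * wfun ε c1 q, (X₁ ε q).2.2.2))
        (conjVF (fun q => ((X₂ ε q).1, (X₂ ε q).2.1, (X₂ ε q).2.2.1,
          (X₂ ε q).2.2.2 + Complex.I * wfun ε c1 q))) p =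
      (0, 0,
       (ε : ℂ) * Complex.I * (4 * wfun ε c1 p * (starRingEnd ℂ) p.1 /
         ((1 + ε * Complex.normSq p.1 : ℝ) : ℂ)), 0) := by
  have hs : (1 + ε * Complex.normSq p.1) ≠ 0 := ne_of_gt hz
  have hS0 : ((1 + ε * Complex.normSq p.1 : ℝ) : ℂ) ≠ 0 := Complex.ofReal_ne_zero.mpr hs
  have hw0 : wfun ε c1 p ≠ 0 := by
    simp only [wfun, ne_eq, Complex.ofReal_eq_zero]
    exact ne_of_gt (Real.sqrt_pos.mpr ha)
  have hwr : ∀ q : ℂ × ℂ, (starRingEnd ℂ) (wfun ε c1 q) = wfun ε c1 q := fun q => by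
    simp [wfun, Complex.conj_ofReal]
  have hG := Aux13.hGf ε p hs
  have hA := Aux13.hAf ε c1 p hs (ne_of_gt ha)
  have hnw : ((Complex.normSq p.2 : ℝ) : ℂ) = p.2 * (starRingEnd ℂ) p.2 :=
    (Complex.mul_conj p.2).symm
  have key : bracketVF
        (fun q => ((X₁ ε q).1, (X₁ ε q).2.1,
          (X₁ ε q).2.2.1 + Complex.I * wfun ε c1 q, (X₁ ε q).2.2.2))
        (conjVF (fun q => ((X₂ ε q).1, (X₂ ε q).2.1, (X₂ ε q).2.2.1,
          (X₂ ε q).2.2.2 + Complex.I * wfun ε c1 q))) p =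
      (0, 0,
       (ε : ℂ) * Complex.I * (4 * wfun ε c1 p * (starRingEnd ℂ) p.1 /
         ((1 + ε * Complex.normSq p.1 : ℝ) : ℂ)), 0) := by
    simp only [bracketVF, appVF, conjVF, X₁, X₂, Prod.mk.injEq, map_add, map_mul, map_div₀,
      map_ofNat, Complex.conj_conj, Complex.conj_ofReal, Complex.conj_I, map_one, map_zero, hwr]
    refine ⟨by simp, by simp, ?_, by simp⟩
    rw [Aux13.dz_hadd hG hA (-Complex.I), Aux13.dz_hadd hG hA Complex.I,
      Aux13.dw_hadd hG hA (-Complex.I), Aux13.dw_hadd hG hA Complex.I,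
      Aux13.dz_Gf ε p hs, Aux13.dw_Gf ε p hs, Aux13.dz_Af ε c1 p hs ha,
      Aux13.dw_Af ε c1 p hs ha]
    rw [hnw]
    obtain ⟨S, hSe, hS0'⟩ : ∃ S : ℂ, ((1 + ε * Complex.normSq p.1 : ℝ) : ℂ) = S ∧ S ≠ 0 :=
      ⟨_, rfl, hS0⟩
    obtain ⟨W, hWe, hW0'⟩ : ∃ W : ℂ, wfun ε c1 p = W ∧ W ≠ 0 := ⟨_, rfl, hw0⟩
    rw [hSe, hWe]
    have hWc : W * W⁻¹ = 1 := mul_inv_cancel₀ hW0'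
    have hSc : S * S⁻¹ = 1 := mul_inv_cancel₀ hS0'
    have hS4 : S ^ 4 * S⁻¹ ^ 4 = 1 := by rw [← mul_pow, hSc, one_pow]
    field_simp
    ring_nf
  refine ⟨?_, key⟩
  rw [key]
  have hrhs : (Complex.I * 2 * wfun ε c1 p) •
        bracketVF (fun _ => (0, 0, 1, 0)) (X₁ ε) p =
      (0, 0,
       (ε : ℂ) * Complex.I * (4 * wfun ε c1 p * (starRingEnd ℂ) p.1 /
         ((1 + ε * Complex.normSq p.1 : ℝ) : ℂ)), 0) := by
    simp only [bracketVF, appVF, X₁, Prod.smul_mk, smul_eq_mul, Prod.mk.injEq]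
    refine ⟨by simp, by simp, ?_, by simp⟩
    rw [Aux13.dw_Gf ε p hs]
    simp only [Aux13.dz_const, Aux13.dzb_const, Aux13.dw_const, Aux13.dwb_const]
    obtain ⟨S, hSe, hS0'⟩ : ∃ S : ℂ, ((1 + ε * Complex.normSq p.1 : ℝ) : ℂ) = S ∧ S ≠ 0 :=
      ⟨_, rfl, hS0⟩
    rw [hSe]
    field_simp
    ring
  exact hrhs.symm
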